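/- Let A, B ∈ ℂ^{n×n} with B sectorial and A B⁻¹ diagonalizable. For any k eigenvalues λ_{i₁},…,λ_{i_k} of A B⁻¹, there exists an isometry U ∈ ℂ^{n×k} (U*U = I) such that ∏_{m=1}^k λ_{i_m} = det(U* A U) / det(U* B U). -/

import Mathlib

open Matrix

/-- The numerical range of a complex square matrix. -/
def numRange {n : ℕ} (A : Matrix (Fin n) (Fin n) ℂ) : Set ℂ :=
  {z | ∃ x : Fin n → ℂ, star x ⬝ᵥ x = 1 ∧ z = star x ⬝ᵥ (A *ᵥ x)}

/-- A matrix whose numerical range avoids 0 is invertible. -/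
lemma isUnit_of_sectorial {n : ℕ} {B : Matrix (Fin n) (Fin n) ℂ}
    (hB : (0 : ℂ) ∉ numRange B) : IsUnit B := by
  rw [← Matrix.mulVec_injective_iff_isUnit]
  have key : ∀ x, B *ᵥ x = 0 → x = 0 := by
    intro x hx
    by_contra hx0
    apply hB
    set t : ℝ := ∑ i, Complex.normSq (x i) with ht
    have htpos : 0 < t := by
      obtain ⟨i, hi⟩ : ∃ i, x i ≠ 0 := by
        by_contra h
        push_neg at h
        exact hx0 (funext h)
      refine Finset.sum_pos' (fun j _ => Complex.normSq_nonneg _) ⟨i, Finset.mem_univ i, ?_⟩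
      exact Complex.normSq_pos.mpr hi
    have hdot : star x ⬝ᵥ x = (t : ℂ) := by
      simp [dotProduct, ht, Complex.normSq_eq_conj_mul_self]
    set a : ℝ := (Real.sqrt t)⁻¹ with ha
    refine ⟨(a : ℂ) • x, ?_, ?_⟩
    · rw [star_smul, smul_dotProduct, dotProduct_smul, hdot]
      have hsa : star ((a : ℝ) : ℂ) = ((a : ℝ) : ℂ) := by
        rw [RCLike.star_def, Complex.conj_ofReal]
      rw [hsa, smul_eq_mul, smul_eq_mul]
      rw [show ((a : ℂ) * ((a : ℂ) * (t : ℂ))) = ((a * a * t : ℝ) : ℂ) by push_cast; ring]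
      rw [ha, ← Real.sqrt_inv, Real.mul_self_sqrt (by positivity)]
      rw [inv_mul_cancel₀ htpos.ne']
      norm_num
    · rw [mulVec_smul, hx, smul_zero, dotProduct_zero]
  intro x y hxy
  have := key (x - y) (by rw [mulVec_sub, hxy, sub_self])
  exact sub_eq_zero.mp this

/-- Compression of a sectorial matrix by an isometry is sectorial. -/
lemma sectorial_compress {n k : ℕ} {B : Matrix (Fin n) (Fin n) ℂ}
    (hB : (0 : ℂ) ∉ numRange B) {U : Matrix (Fin n) (Fin k) ℂ} (hU : Uᴴ * U = 1) :
    (0 : ℂ) ∉ numRange (Uᴴ * B * U) := by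
  rintro ⟨x, hx1, hx2⟩
  apply hB
  refine ⟨U *ᵥ x, ?_, ?_⟩
  · rw [star_mulVec, dotProduct_mulVec, vecMul_vecMul, hU, vecMul_one, hx1]
  · rw [hx2, star_mulVec, dotProduct_mulVec, dotProduct_mulVec, vecMul_vecMul,
      dotProduct_mulVec, vecMul_vecMul, Matrix.mul_assoc]

/-- Compound spectral containment: if `B` is sectorial and `A B⁻¹` is diagonalizable
with eigenvalues `dd`, then the product of any `k` eigenvalues of `A B⁻¹` equals
`det(Uᴴ A U)/det(Uᴴ B U)` for some isometry `U : ℂⁿ→ᵏ`. -/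
theorem compound_spectrum_containment (n k : ℕ)
    (A B : Matrix (Fin n) (Fin n) ℂ) (hB : (0 : ℂ) ∉ numRange B)
    (P : Matrix (Fin n) (Fin n) ℂ) (dd : Fin n → ℂ) (hP : IsUnit P)
    (hdiag : A * B⁻¹ = P * Matrix.diagonal dd * P⁻¹)
    (s : Fin k → Fin n) (hs : Function.Injective s) :
    ∃ U : Matrix (Fin n) (Fin k) ℂ, Uᴴ * U = 1 ∧
      (∏ m : Fin k, dd (s m)) = (Uᴴ * A * U).det / (Uᴴ * B * U).det := by
  classical
  have hBunit : IsUnit B := isUnit_of_sectorial hB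
  have hBdet : IsUnit B.det := (Matrix.isUnit_iff_isUnit_det B).mp hBunit
  have hPdet : IsUnit P.det := (Matrix.isUnit_iff_isUnit_det P).mp hP
  -- selection matrix
  set E : Matrix (Fin n) (Fin k) ℂ :=
    Matrix.of fun (j : Fin n) (m : Fin k) => if j = s m then (1 : ℂ) else 0 with hE
  set V : Matrix (Fin n) (Fin k) ℂ := P * E with hV
  set W : Matrix (Fin n) (Fin k) ℂ := B⁻¹ * V with hW
  -- diagonal commutation
  have hDE : Matrix.diagonal dd * E = E * Matrix.diagonal (fun m => dd (s m)) := by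
    ext j m
    rw [Matrix.diagonal_mul, Matrix.mul_diagonal]
    by_cases h : j = s m <;> simp [hE, h]
  -- key matrix identities
  have hAW : A * W = V * Matrix.diagonal (fun m => dd (s m)) := by
    have h1 : A * W = A * B⁻¹ * V := by rw [hW, Matrix.mul_assoc]
    rw [h1, hdiag, hV]
    have hPP : P⁻¹ * P = 1 := Matrix.nonsing_inv_mul P hPdet
    rw [Matrix.mul_assoc (P * Matrix.diagonal dd) P⁻¹ (P * E),
      ← Matrix.mul_assoc P⁻¹ P E, hPP, Matrix.one_mul, Matrix.mul_assoc, hDE,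
      ← Matrix.mul_assoc]
  have hBW : B * W = V := by
    rw [hW, ← Matrix.mul_assoc, Matrix.mul_nonsing_inv B hBdet, Matrix.one_mul]
  -- injectivity of W.mulVec
  have hEinj : Function.Injective E.mulVec := by
    intro x y hxy
    funext m
    have hx : ∀ z : Fin k → ℂ, (E *ᵥ z) (s m) = z m := by
      intro z
      simp only [mulVec, dotProduct, hE, Matrix.of_apply, hs.eq_iff, ite_mul, one_mul, zero_mul]
      simp
    have := congrFun hxy (s m)
    rwa [hx, hx] at this
  have hBinvinj : Function.Injective (B⁻¹).mulVec := by
    intro x y hxy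
    have := congrArg (B.mulVec) hxy
    rwa [mulVec_mulVec, mulVec_mulVec, Matrix.mul_nonsing_inv B hBdet, one_mulVec,
      one_mulVec] at this
  have hWinj : Function.Injective W.mulVec := by
    intro x y hxy
    have h : ∀ z, W *ᵥ z = B⁻¹ *ᵥ (P *ᵥ (E *ᵥ z)) := by
      intro z; rw [hW, hV, mulVec_mulVec, mulVec_mulVec, Matrix.mul_assoc]
    rw [h, h] at hxy
    exact hEinj (Matrix.mulVec_injective_iff_isUnit.mpr hP (hBinvinj hxy))
  -- columns of W as vectors in Euclidean space
  set col : Fin k → EuclideanSpace ℂ (Fin n) := fun m => WithLp.toLp 2 (fun j => W j m) with hcol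
  have hlin : LinearIndependent ℂ col := by
    have h := Matrix.mulVec_injective_iff.mp hWinj
    exact h.map' (WithLp.linearEquiv 2 ℂ (Fin n → ℂ)).symm.toLinearMap
      (LinearEquiv.ker _)
  set S : Submodule ℂ (EuclideanSpace ℂ (Fin n)) := Submodule.span ℂ (Set.range col) with hS
  have hfin : Module.finrank ℂ S = k := by
    rw [hS, finrank_span_eq_card hlin, Fintype.card_fin]
  set b : OrthonormalBasis (Fin k) ℂ S :=
    (stdOrthonormalBasis ℂ S).reindex (finCongr hfin) with hb
  set U : Matrix (Fin n) (Fin k) ℂ :=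
    Matrix.of fun i m => ((b m : S) : EuclideanSpace ℂ (Fin n)) i with hU
  -- inner products of columns of U
  have hinner : ∀ p q : Fin k,
      (∑ i, (starRingEnd ℂ) (U i p) * U i q) = if p = q then 1 else 0 := by
    intro p q
    have horth := b.orthonormal
    rw [orthonormal_iff_ite] at horth
    have := horth p q
    rw [Submodule.coe_inner, PiLp.inner_apply] at this
    simpa [hU, RCLike.inner_apply, mul_comm] using this
  have hUU : Uᴴ * U = 1 := by
    ext p q
    rw [Matrix.mul_apply, Matrix.one_apply]
    simpa [Matrix.conjTranspose_apply] using hinner p q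
  -- projection property: U Uᴴ is identity on S
  have hproj : ∀ w : EuclideanSpace ℂ (Fin n), w ∈ S →
      ∀ i, (U *ᵥ (Uᴴ *ᵥ (fun j => w j))) i = w i := by
    intro w hw i
    have hr := b.sum_repr ⟨w, hw⟩
    have hrep : ∀ m, b.repr ⟨w, hw⟩ m = ∑ j, (starRingEnd ℂ) (U j m) * w j := by
      intro m
      rw [b.repr_apply_apply, Submodule.coe_inner, PiLp.inner_apply]
      simp [hU, RCLike.inner_apply, mul_comm]
    have hcoe := congrArg (fun v : S => (v : EuclideanSpace ℂ (Fin n)) i) hr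
    simp only [AddSubmonoidClass.coe_finset_sum, SetLike.val_smul] at hcoe
    have hsum : (∑ m, b.repr ⟨w, hw⟩ m • ((b m : S) : EuclideanSpace ℂ (Fin n))) i = w i := by
      simpa using hcoe
    rw [WithLp.ofLp_sum, Finset.sum_apply] at hsum
    calc (U *ᵥ (Uᴴ *ᵥ fun j => w j)) i
        = ∑ m, U i m * ∑ j, (starRingEnd ℂ) (U j m) * w j := by
          simp [mulVec, dotProduct, Matrix.conjTranspose_apply]
      _ = ∑ m, b.repr ⟨w, hw⟩ m * U i m := by
          refine Finset.sum_congr rfl fun m _ => ?_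
          rw [hrep m]; ring
      _ = w i := by
          rw [← hsum]
          refine Finset.sum_congr rfl fun m _ => ?_
          simp [hU, smul_eq_mul]
  -- W = U R
  set R : Matrix (Fin k) (Fin k) ℂ := Uᴴ * W with hR
  have hUR : U * R = W := by
    ext i m
    have h := hproj (col m) (Submodule.subset_span ⟨m, rfl⟩) i
    rw [hR, ← Matrix.mul_assoc]
    calc (U * Uᴴ * W) i m = (U *ᵥ (Uᴴ *ᵥ (fun j => col m j))) i := by
          simp only [Matrix.mul_apply, mulVec, dotProduct, hcol, Matrix.conjTranspose_apply,
            Finset.mul_sum, Finset.sum_mul, RCLike.star_def]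
          rw [Finset.sum_comm]
          exact Finset.sum_congr rfl fun _ _ => Finset.sum_congr rfl fun _ _ => mul_assoc _ _ _
      _ = W i m := by rw [h]
  -- R is invertible
  have hRunit : IsUnit R := by
    rw [← Matrix.mulVec_injective_iff_isUnit]
    intro x y hxy
    apply hWinj
    have hz : ∀ z, W *ᵥ z = U *ᵥ (R *ᵥ z) := by
      intro z; rw [← hUR, ← mulVec_mulVec]
    rw [hz, hz, hxy]
  have hRdet : R.det ≠ 0 := ((Matrix.isUnit_iff_isUnit_det R).mp hRunit).ne_zero
  -- compression of B is invertible
  have hBUdet : (Uᴴ * B * U).det ≠ 0 :=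
    ((Matrix.isUnit_iff_isUnit_det _).mp
      (isUnit_of_sectorial (sectorial_compress hB hUU))).ne_zero
  -- determinant identities
  have hA2 : Uᴴ * A * U * R = Uᴴ * V * Matrix.diagonal (fun m => dd (s m)) := by
    rw [Matrix.mul_assoc (Uᴴ * A) U R, hUR, Matrix.mul_assoc Uᴴ A W, hAW,
      ← Matrix.mul_assoc]
  have hB2 : Uᴴ * B * U * R = Uᴴ * V := by
    rw [Matrix.mul_assoc (Uᴴ * B) U R, hUR, Matrix.mul_assoc Uᴴ B W, hBW]
  have e1 : (Uᴴ * A * U).det * R.det = (Uᴴ * V).det * ∏ m, dd (s m) := by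
    rw [← Matrix.det_mul, hA2, Matrix.det_mul, Matrix.det_diagonal]
  have e2 : (Uᴴ * B * U).det * R.det = (Uᴴ * V).det := by
    rw [← Matrix.det_mul, hB2]
  have hfinal : (Uᴴ * A * U).det = (Uᴴ * B * U).det * ∏ m, dd (s m) := by
    apply mul_right_cancel₀ hRdet
    rw [e1, ← e2]; ring
  exact ⟨U, hUU, by rw [hfinal, mul_comm, mul_div_assoc, div_self hBUdet, mul_one]⟩
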